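/- Let X be an n-dimensional real Banach space. Then the unit sphere S_X admits a symmetric ball-covering consisting of 2n open balls, i.e., there exist x₁,…,x_n ∈ X\{0} and radii 0 < rᵢ ≤ ‖xᵢ‖ with S_X ⊆ ⋃_{i=1}^n (B(xᵢ, rᵢ) ∪ B(−xᵢ, rᵢ)). -/

import Mathlib

open Metric Filter Set Topology


lemma norm_subgrad {X : Type*} [NormedAddCommGroup X] [NormedSpace ℝ X]
    {g : X →L[ℝ] ℝ} {x : X} (h : HasFDerivAt (fun w : X => ‖w‖) g x) (z : X) :
    ‖x‖ + g (z - x) ≤ ‖z‖ := by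
  have hc : HasDerivAt (fun t : ℝ => x + t • (z - x)) (z - x) 0 := by
    simpa using ((hasDerivAt_id (0:ℝ)).smul_const (z - x)).const_add x
  have hx0 : x + (0:ℝ) • (z - x) = x := by simp
  have hφ : HasDerivAt (fun t : ℝ => ‖x + t • (z - x)‖) (g (z - x)) 0 := by
    have := HasFDerivAt.comp_hasDerivAt 0 (by rw [hx0]; exact h) hc
    simpa [Function.comp_def] using this
  have hs : Tendsto (slope (fun t : ℝ => ‖x + t • (z - x)‖) 0) (𝓝[>] 0) (𝓝 (g (z - x))) :=
    (hasDerivAt_iff_tendsto_slope.mp hφ).mono_left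
      (nhdsWithin_mono 0 (fun t ht => ne_of_gt ht))
  have hb : ∀ᶠ t in 𝓝[>] (0:ℝ),
      slope (fun t : ℝ => ‖x + t • (z - x)‖) 0 t ≤ ‖z‖ - ‖x‖ := by
    filter_upwards [Ioo_mem_nhdsGT_of_mem (by norm_num : (0:ℝ) ∈ Ico 0 1)] with t ht
    rw [slope_def_field]
    have hid : x + t • (z - x) = (1 - t) • x + t • z := by module
    have hb1 : ‖x + t • (z - x)‖ ≤ (1 - t) * ‖x‖ + t * ‖z‖ := by
      rw [hid]
      calc ‖(1 - t) • x + t • z‖ ≤ ‖(1-t) • x‖ + ‖t • z‖ := norm_add_le _ _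
        _ = (1 - t) * ‖x‖ + t * ‖z‖ := by
            rw [norm_smul, norm_smul, Real.norm_eq_abs, Real.norm_eq_abs,
              abs_of_nonneg (by linarith [ht.2] : (0:ℝ) ≤ 1 - t), abs_of_pos ht.1]
    rw [div_le_iff₀ (by simpa using ht.1)]
    simp only [zero_smul, add_zero, sub_zero]
    nlinarith [ht.1]
  linarith [le_of_tendsto hs hb]

lemma norm_eps {X : Type*} [NormedAddCommGroup X] [NormedSpace ℝ X]
    {g : X →L[ℝ] ℝ} {x : X} (h : HasFDerivAt (fun w : X => ‖w‖) g x)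
    {δ : ℝ} (hδ : 0 < δ) :
    ∃ ε : ℝ, 0 < ε ∧ ∀ y : X, ‖y‖ = 1 →
      (δ ≤ g y → ‖x - ε • y‖ < ‖x‖) ∧ (g y ≤ -δ → ‖x + ε • y‖ < ‖x‖) := by
  have hO := hasFDerivAt_iff_isLittleO_nhds_zero.mp h
  have hev := hO.def (half_pos hδ)
  rw [Metric.eventually_nhds_iff] at hev
  obtain ⟨ρ, hρ, hball⟩ := hev
  refine ⟨ρ/2, half_pos hρ, fun y hy => ?_⟩
  have key : ∀ s : ℝ, |s| = ρ/2 → |‖x + s • y‖ - ‖x‖ - s * g y| ≤ δ/2 * (ρ/2) := by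
    intro s hs
    have hdist : dist (s • y) 0 < ρ := by
      rw [dist_zero_right, norm_smul, Real.norm_eq_abs, hy, hs]; linarith
    have := hball hdist
    simp only [Real.norm_eq_abs, map_smul, smul_eq_mul] at this
    calc |‖x + s • y‖ - ‖x‖ - s * g y| ≤ δ/2 * ‖s • y‖ := this
      _ = δ/2 * (ρ/2) := by rw [norm_smul, Real.norm_eq_abs, hy, hs, mul_one]
  constructor
  · intro hgy
    have := key (-(ρ/2)) (by rw [abs_neg, abs_of_pos (half_pos hρ)])
    have h1 : ‖x + (-(ρ/2)) • y‖ - ‖x‖ - (-(ρ/2)) * g y ≤ δ/2 * (ρ/2) :=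
      (abs_le.mp this).2
    have h2 : x + (-(ρ/2)) • y = x - (ρ/2) • y := by module
    rw [h2] at h1
    nlinarith [half_pos hρ]
  · intro hgy
    have := key (ρ/2) (abs_of_pos (half_pos hρ))
    have h1 : ‖x + (ρ/2) • y‖ - ‖x‖ - (ρ/2) * g y ≤ δ/2 * (ρ/2) := (abs_le.mp this).2
    nlinarith [half_pos hρ]


lemma exists_annihilated {X : Type*} [NormedAddCommGroup X] [NormedSpace ℝ X]
    [FiniteDimensional ℝ X]
    (W : Submodule ℝ (X →L[ℝ] ℝ)) (hW : W ≠ ⊤) :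
    ∃ v : X, v ≠ 0 ∧ ∀ g ∈ W, g v = 0 := by
  have hrk : Module.finrank ℝ (X →L[ℝ] ℝ) = Module.finrank ℝ X := by
    rw [← (LinearMap.toContinuousLinearMap :
        (X →ₗ[ℝ] ℝ) ≃ₗ[ℝ] (X →L[ℝ] ℝ)).finrank_eq]
    exact Subspace.dual_finrank_eq
  have hlt : Module.finrank ℝ W < Module.finrank ℝ X := by
    have := Submodule.finrank_lt hW
    omega
  set k := Module.finrank ℝ W with hk
  let b : Module.Basis (Fin k) ℝ W :=
    haveI := Module.Free.of_divisionRing ℝ W; Module.finBasis ℝ W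
  let Φ : X →ₗ[ℝ] (Fin k → ℝ) :=
    LinearMap.pi (fun j => ((b j : X →L[ℝ] ℝ) : X →ₗ[ℝ] ℝ))
  have hker : LinearMap.ker Φ ≠ ⊥ := by
    intro hbot
    have h1 := LinearMap.finrank_range_add_finrank_ker Φ
    rw [hbot, finrank_bot, add_zero] at h1
    have h2 : Module.finrank ℝ (LinearMap.range Φ) ≤ k := by
      calc Module.finrank ℝ (LinearMap.range Φ) ≤ Module.finrank ℝ (Fin k → ℝ) :=
        Submodule.finrank_le _
      _ = k := by simp
    omega
  obtain ⟨v, hvker, hv0⟩ := (Submodule.ne_bot_iff _).mp hker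
  refine ⟨v, hv0, fun g hg => ?_⟩
  have hbv : ∀ j : Fin k, (b j : X →L[ℝ] ℝ) v = 0 := by
    have := hvker
    rw [LinearMap.mem_ker] at this
    intro j
    have := congrFun this j
    simpa [Φ] using this
  have hrep := b.sum_repr ⟨g, hg⟩
  have hgeq : g = ∑ j, b.repr ⟨g, hg⟩ j • ((b j : X →L[ℝ] ℝ)) := by
    calc g = ((⟨g, hg⟩ : W) : X →L[ℝ] ℝ) := rfl
      _ = ((∑ j, b.repr ⟨g, hg⟩ j • b j : W) : X →L[ℝ] ℝ) := by rw [hrep]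
      _ = ∑ j, b.repr ⟨g, hg⟩ j • ((b j : X →L[ℝ] ℝ)) := by push_cast; rfl
  calc g v = ∑ j, b.repr ⟨g, hg⟩ j • ((b j : X →L[ℝ] ℝ) v) := by
        conv_lhs => rw [hgeq]
        simp
    _ = 0 := by simp [hbv]


lemma finrank_clm {X : Type*} [NormedAddCommGroup X] [NormedSpace ℝ X]
    [FiniteDimensional ℝ X] :
    Module.finrank ℝ (X →L[ℝ] ℝ) = Module.finrank ℝ X := by
  rw [← (LinearMap.toContinuousLinearMap :
      (X →ₗ[ℝ] ℝ) ≃ₗ[ℝ] (X →L[ℝ] ℝ)).finrank_eq]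
  exact Subspace.dual_finrank_eq


/-- The unit sphere of an n-dimensional real Banach space admits a
symmetric ball-covering by 2n origin-avoiding open balls. -/
theorem stmt7 {X : Type*} [NormedAddCommGroup X] [NormedSpace ℝ X]
    [FiniteDimensional ℝ X] (n : ℕ) (hdim : Module.finrank ℝ X = n) :
    ∃ (x : Fin n → X) (r : Fin n → ℝ),
      (∀ i, x i ≠ 0 ∧ 0 < r i ∧ r i ≤ ‖x i‖) ∧
      sphere (0 : X) 1 ⊆ ⋃ i, (ball (x i) (r i) ∪ ball (-(x i)) (r i)) := by
  rcases Nat.eq_zero_or_pos n with hn | hn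
  · subst hn
    refine ⟨Fin.elim0, Fin.elim0, fun i => i.elim0, fun y hy => ?_⟩
    exfalso
    haveI : Subsingleton X := Module.finrank_zero_iff.mp hdim
    rw [mem_sphere_zero_iff_norm, Subsingleton.elim y 0] at hy
    simp at hy
  haveI hnt : Nontrivial X := Module.finrank_pos_iff.mp (by rw [hdim]; exact hn)
  borelize X
  set Nm : X → ℝ := fun w => ‖w‖ with hNm
  let bX := Module.Basis.ofVectorSpace ℝ X
  let μ := bX.addHaar
  have hae : ∀ᵐ x ∂μ, DifferentiableAt ℝ Nm x :=
    lipschitzWith_one_norm.ae_differentiableAt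
  have hdense : ∀ v : X, v ≠ 0 →
      ∃ x : X, DifferentiableAt ℝ Nm x ∧ ‖x - v‖ < ‖v‖ / 2 := by
    intro v hv
    by_contra hcon
    push_neg at hcon
    have hsub : ball v (‖v‖ / 2) ⊆ {x : X | ¬ DifferentiableAt ℝ Nm x} := by
      intro x hx
      rw [mem_ball_iff_norm] at hx
      exact fun hd => absurd hx (not_lt.mpr (hcon x hd))
    have h2 : μ {x : X | ¬ DifferentiableAt ℝ Nm x} = 0 := by
      rwa [MeasureTheory.ae_iff] at hae
    have h3 := MeasureTheory.measure_mono (μ := μ) hsub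
    rw [h2] at h3
    exact absurd (le_antisymm h3 zero_le)
      (ne_of_gt (measure_ball_pos μ v (half_pos (norm_pos_iff.mpr hv))))
  set Sg : Set (X →L[ℝ] ℝ) := {g | ∃ x : X, x ≠ 0 ∧ HasFDerivAt Nm g x} with hSg
  have hspan : Submodule.span ℝ Sg = ⊤ := by
    by_contra hne
    obtain ⟨v, hv0, hvann⟩ := exists_annihilated _ hne
    obtain ⟨x, hdiff, hx⟩ := hdense v hv0
    have hxlb : ‖v‖ / 2 < ‖x‖ := by
      have := norm_sub_norm_le x v
      have h4 := norm_sub_norm_le v x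
      rw [norm_sub_rev] at h4
      linarith
    have hxne : x ≠ 0 := by
      intro h; rw [h, norm_zero] at hxlb
      have := norm_pos_iff.mpr hv0; linarith
    have hF := hdiff.hasFDerivAt
    have hmem : fderiv ℝ Nm x ∈ Sg := ⟨x, hxne, hF⟩
    have hg0 : fderiv ℝ Nm x v = 0 := hvann _ (Submodule.subset_span hmem)
    have hsg := norm_subgrad hF (x - v)
    have : (fderiv ℝ Nm x) (x - v - x) = 0 := by
      have : x - v - x = -v := by abel
      rw [this, map_neg, hg0, neg_zero]
    rw [this] at hsg
    -- hsg : ‖x‖ + 0 ≤ ‖x - v‖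
    linarith
  obtain ⟨s, hsub, hspan_s, hli⟩ := exists_linearIndependent ℝ Sg
  have hsfin : s.Finite := hli.setFinite
  haveI := hsfin.fintype
  let bb : Module.Basis s ℝ (X →L[ℝ] ℝ) := Module.Basis.mk hli (by
    rw [Subtype.range_coe, hspan_s, hspan])
  have hcard : Fintype.card s = n := by
    rw [← Module.finrank_eq_card_basis bb, finrank_clm, hdim]
  let eqv : Fin n ≃ s := (Fintype.equivFinOfCardEq hcard).symm
  set g : Fin n → (X →L[ℝ] ℝ) := fun i => ((eqv i : s) : X →L[ℝ] ℝ) with hg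
  have hgmem : ∀ i : Fin n, g i ∈ Sg := fun i => hsub (eqv i).2
  choose pt hpt hder using hgmem
  -- separation
  have hsep : ∀ y : X, y ≠ 0 → ∃ i, g i y ≠ 0 := by
    intro y hy0
    by_contra hcon
    push_neg at hcon
    let evy : (X →L[ℝ] ℝ) →ₗ[ℝ] ℝ :=
      { toFun := fun h => h y, map_add' := fun a b => rfl, map_smul' := fun c a => rfl }
    have hker : Submodule.span ℝ s ≤ LinearMap.ker evy := by
      rw [Submodule.span_le]
      intro e he
      have h1 : e = g (eqv.symm ⟨e, he⟩) := by simp [hg]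
      have h2 : evy e = 0 := by
        show e y = 0
        rw [h1]; exact hcon _
      exact SetLike.mem_coe.mpr (LinearMap.mem_ker.mpr h2)
    rw [hspan_s, hspan] at hker
    obtain ⟨gd, _, hgd⟩ := exists_dual_vector ℝ y (norm_ne_zero_iff.mpr hy0)
    have : gd y = 0 := hker (Submodule.mem_top)
    rw [this] at hgd
    exact absurd hgd.symm (by simpa using norm_ne_zero_iff.mpr hy0)
  -- compact minimum
  have hSne : (sphere (0:X) 1).Nonempty := NormedSpace.sphere_nonempty.mpr zero_le_one
  set F : X → ℝ := fun y => ∑ i, |g i y| with hF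
  have hFc : Continuous F := by
    apply continuous_finset_sum
    exact fun i _ => (g i).continuous.abs
  obtain ⟨y₀, hy₀S, hmin'⟩ := (isCompact_sphere (0:X) 1).exists_isMinOn hSne hFc.continuousOn
  have hmin := isMinOn_iff.mp hmin'
  set m := F y₀ with hm'
  have hm : 0 < m := by
    have hy₀ : y₀ ≠ 0 := by
      rw [mem_sphere_zero_iff_norm] at hy₀S
      intro h; rw [h, norm_zero] at hy₀S; norm_num at hy₀S
    obtain ⟨i, hi⟩ := hsep y₀ hy₀
    calc (0:ℝ) < |g i y₀| := abs_pos.mpr hi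
      _ ≤ F y₀ := by
        simp only [hF]
        exact Finset.single_le_sum (f := fun j => |g j y₀|)
          (fun j _ => abs_nonneg _) (Finset.mem_univ i)
  set δ := m / n with hδ'
  have hδ : 0 < δ := div_pos hm (by exact_mod_cast hn)
  have hchoice : ∀ y ∈ sphere (0:X) 1, ∃ i, δ ≤ |g i y| := by
    intro y hyS
    by_contra hcon
    push_neg at hcon
    have : F y < ∑ _i : Fin n, δ :=
      Finset.sum_lt_sum_of_nonempty (Finset.univ_nonempty_iff.mpr
        ⟨⟨0, hn⟩⟩) (fun i _ => hcon i)
    rw [Finset.sum_const, Finset.card_univ, Fintype.card_fin, nsmul_eq_mul, hδ'] at this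
    have hne : (n:ℝ) ≠ 0 := by exact_mod_cast Nat.pos_iff_ne_zero.mp hn
    rw [mul_div_cancel₀ _ hne] at this
    exact absurd (hmin y hyS) (not_le.mpr this)
  choose ε hε hεp using fun i => norm_eps (hder i) hδ
  refine ⟨fun i => (ε i)⁻¹ • pt i, fun i => (ε i)⁻¹ * ‖pt i‖, fun i => ?_, ?_⟩
  · refine ⟨smul_ne_zero (inv_ne_zero (ne_of_gt (hε i))) (hpt i), ?_, ?_⟩
    · exact mul_pos (inv_pos.mpr (hε i)) (norm_pos_iff.mpr (hpt i))
    · rw [norm_smul, Real.norm_eq_abs, abs_of_pos (inv_pos.mpr (hε i))]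
  · intro y hyS
    have hy1 : ‖y‖ = 1 := mem_sphere_zero_iff_norm.mp hyS
    obtain ⟨i, hi⟩ := hchoice y hyS
    have hεi := hε i
    have hkey : ‖y - (ε i)⁻¹ • pt i‖ = (ε i)⁻¹ * ‖ε i • y - pt i‖ := by
      rw [show y - (ε i)⁻¹ • pt i = (ε i)⁻¹ • (ε i • y - pt i) by
        rw [smul_sub, smul_smul, inv_mul_cancel₀ (ne_of_gt hεi), one_smul]]
      rw [norm_smul, Real.norm_eq_abs, abs_of_pos (inv_pos.mpr hεi)]
    have hkey2 : ‖y + (ε i)⁻¹ • pt i‖ = (ε i)⁻¹ * ‖ε i • y + pt i‖ := by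
      rw [show y + (ε i)⁻¹ • pt i = (ε i)⁻¹ • (ε i • y + pt i) by
        rw [smul_add, smul_smul, inv_mul_cancel₀ (ne_of_gt hεi), one_smul]]
      rw [norm_smul, Real.norm_eq_abs, abs_of_pos (inv_pos.mpr hεi)]
    rcases le_or_gt δ (g i y) with hcase | hcase
    · refine mem_iUnion.mpr ⟨i, Or.inl ?_⟩
      rw [mem_ball, dist_eq_norm, hkey]
      have hlt : ‖pt i - ε i • y‖ < ‖pt i‖ := (hεp i y hy1).1 hcase
      rw [norm_sub_rev] at hlt
      exact mul_lt_mul_of_pos_left hlt (inv_pos.mpr hεi)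
    · refine mem_iUnion.mpr ⟨i, Or.inr ?_⟩
      have hneg : g i y ≤ -δ := by
        rcases abs_cases (g i y) with ⟨h1, _⟩ | ⟨h1, _⟩
        · rw [h1] at hi; linarith
        · rw [h1] at hi; linarith
      rw [mem_ball, dist_eq_norm, sub_neg_eq_add, hkey2]
      have hlt : ‖pt i + ε i • y‖ < ‖pt i‖ := (hεp i y hy1).2 hneg
      rw [show ε i • y + pt i = pt i + ε i • y by abel]
      exact mul_lt_mul_of_pos_left hlt (inv_pos.mpr hεi)
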